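/- Consider real affine conics, i.e. equivalence classes, up to nonzero real scaling, of nonzero real polynomials q(x,y) of degree at most 2; say such a conic is tangent to an affine line L if the restriction of q to a linear parametrization of L is a polynomial of degree exactly 2 with a double root. Then: (a) there are exactly 2 real conics passing through the four points (1,0), (-1,0), (0,1), (0,-1) and tangent to the line x = 2, and both are smooth (their associated symmetric 3x3 matrices are nondegenerate); (b) there are no real conics passing through the four points (1,0), (-1,0), (0,1), (0,3) and tangent to the line y = -1. In particular, the number of real conics through four fixed points tangent to a given line depends on the configuration of the points. -/

import Mathlib

noncomputable section

/-- The value at `(x, y)` of the affine conic with coefficient vector `q`,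
`q₀x² + q₁xy + q₂y² + q₃x + q₄y + q₅`. -/
def qval (q : Fin 6 → ℝ) (x y : ℝ) : ℝ :=
  q 0 * x ^ 2 + q 1 * (x * y) + q 2 * y ^ 2 + q 3 * x + q 4 * y + q 5

/-- The symmetric `3×3` matrix associated with the affine conic `q`. -/
def affMat (q : Fin 6 → ℝ) : Matrix (Fin 3) (Fin 3) ℝ :=
  !![q 0, q 1 / 2, q 3 / 2; q 1 / 2, q 2, q 4 / 2; q 3 / 2, q 4 / 2, q 5]

/-- The conic `q` is tangent to the affine line `s ↦ (p₁ + s u₁, p₂ + s u₂)`: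
the restriction of `q` to this linear parametrization is a polynomial of degree exactly
`2` in `s` having a double root (vanishing discriminant). -/
def TangentLineAff (q : Fin 6 → ℝ) (p₁ p₂ u₁ u₂ : ℝ) : Prop :=
  (q 0 * u₁ ^ 2 + q 1 * (u₁ * u₂) + q 2 * u₂ ^ 2) ≠ 0 ∧
  (2 * q 0 * p₁ * u₁ + q 1 * (p₁ * u₂ + p₂ * u₁) + 2 * q 2 * p₂ * u₂
      + q 3 * u₁ + q 4 * u₂) ^ 2 -
    4 * (q 0 * u₁ ^ 2 + q 1 * (u₁ * u₂) + q 2 * u₂ ^ 2) * qval q p₁ p₂ = 0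

/-- First tangent conic: `x² + √3 xy + y² - 1`. -/
def conicA : Fin 6 → ℝ
  | 0 => 1 | 1 => Real.sqrt 3 | 2 => 1 | 3 => 0 | 4 => 0 | 5 => -1

/-- Second tangent conic: `x² - √3 xy + y² - 1`. -/
def conicB : Fin 6 → ℝ
  | 0 => 1 | 1 => -Real.sqrt 3 | 2 => 1 | 3 => 0 | 4 => 0 | 5 => -1

lemma sqrt3_sq : Real.sqrt 3 ^ 2 = 3 := Real.sq_sqrt (by norm_num)

lemma sqrt3_pos : 0 < Real.sqrt 3 := Real.sqrt_pos.mpr (by norm_num)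

lemma conicA_ne_conicB : conicA ≠ conicB := by
  intro h
  have h1 := congrFun h 1
  simp only [conicA, conicB] at h1
  nlinarith [sqrt3_pos]

lemma conicA_good : conicA ≠ 0 ∧
    qval conicA 1 0 = 0 ∧ qval conicA (-1) 0 = 0 ∧ qval conicA 0 1 = 0 ∧
      qval conicA 0 (-1) = 0 ∧
    TangentLineAff conicA 2 0 0 1 ∧ (affMat conicA).det ≠ 0 := by
  refine ⟨?_, ?_, ?_, ?_, ?_, ⟨?_, ?_⟩, ?_⟩
  · intro h; have := congrFun h 0; norm_num [conicA] at this
  · norm_num [qval, conicA]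
  · norm_num [qval, conicA]
  · norm_num [qval, conicA]
  · norm_num [qval, conicA]
  · norm_num [conicA]
  · norm_num [qval, conicA]; nlinarith [sqrt3_sq]
  · rw [affMat, Matrix.det_fin_three]
    norm_num [conicA]
    simp only [Matrix.cons_val_two, Matrix.tail_cons, Matrix.head_cons, Matrix.vecHead, Matrix.cons_val_zero]
    nlinarith [sqrt3_sq]

lemma conicB_good : conicB ≠ 0 ∧
    qval conicB 1 0 = 0 ∧ qval conicB (-1) 0 = 0 ∧ qval conicB 0 1 = 0 ∧
      qval conicB 0 (-1) = 0 ∧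
    TangentLineAff conicB 2 0 0 1 ∧ (affMat conicB).det ≠ 0 := by
  refine ⟨?_, ?_, ?_, ?_, ?_, ⟨?_, ?_⟩, ?_⟩
  · intro h; have := congrFun h 0; norm_num [conicB] at this
  · norm_num [qval, conicB]
  · norm_num [qval, conicB]
  · norm_num [qval, conicB]
  · norm_num [qval, conicB]
  · norm_num [conicB]
  · norm_num [qval, conicB]; nlinarith [sqrt3_sq]
  · rw [affMat, Matrix.det_fin_three]
    norm_num [conicB]
    simp only [Matrix.cons_val_two, Matrix.tail_cons, Matrix.head_cons, Matrix.vecHead, Matrix.cons_val_zero]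
    nlinarith [sqrt3_sq]

lemma no_crossAB (r : ℝ) : conicA ≠ r • conicB := by
  intro h
  have h0 := congrFun h 0
  have h1 := congrFun h 1
  simp [conicA, conicB, Pi.smul_apply, smul_eq_mul] at h0 h1
  rw [← h0] at h1
  nlinarith [sqrt3_pos]

lemma no_crossBA (r : ℝ) : conicB ≠ r • conicA := by
  intro h
  have h0 := congrFun h 0
  have h1 := congrFun h 1
  simp [conicA, conicB, Pi.smul_apply, smul_eq_mul] at h0 h1
  rw [← h0] at h1
  nlinarith [sqrt3_pos]

/-- (a) There are exactly two real conics through `(1,0), (-1,0), (0,1), (0,-1)` tangent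
to the line `x = 2`, and both are smooth; (b) there is no real conic through
`(1,0), (-1,0), (0,1), (0,3)` tangent to the line `y = -1`.  In particular, the number of
real conics through four fixed points tangent to a given line depends on the
configuration of the points. -/
theorem real_conics_through_four_points_tangent_to_line_not_invariant :
    (∃ S : Finset (Fin 6 → ℝ), S.card = 2 ∧
      (∀ q ∈ S, q ≠ 0 ∧
        qval q 1 0 = 0 ∧ qval q (-1) 0 = 0 ∧ qval q 0 1 = 0 ∧ qval q 0 (-1) = 0 ∧
        TangentLineAff q 2 0 0 1 ∧ (affMat q).det ≠ 0) ∧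
      (∀ q : Fin 6 → ℝ,
        (q ≠ 0 ∧ qval q 1 0 = 0 ∧ qval q (-1) 0 = 0 ∧ qval q 0 1 = 0 ∧
          qval q 0 (-1) = 0 ∧ TangentLineAff q 2 0 0 1) →
        ∃ q' ∈ S, ∃ r : ℝ, r ≠ 0 ∧ q = r • q') ∧
      (∀ q ∈ S, ∀ q' ∈ S, (∃ r : ℝ, r ≠ 0 ∧ q = r • q') → q = q')) ∧
    (¬ ∃ q : Fin 6 → ℝ, q ≠ 0 ∧
      qval q 1 0 = 0 ∧ qval q (-1) 0 = 0 ∧ qval q 0 1 = 0 ∧ qval q 0 3 = 0 ∧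
      TangentLineAff q 0 (-1) 1 0) := by
  constructor
  · refine ⟨{conicA, conicB}, ?_, ?_, ?_, ?_⟩
    · rw [Finset.card_insert_of_notMem (by simp [conicA_ne_conicB]),
        Finset.card_singleton]
    · intro q hq
      rcases Finset.mem_insert.mp hq with h | h
      · subst h; exact conicA_good
      · rw [Finset.mem_singleton] at h; subst h; exact conicB_good
    · rintro q ⟨hne, h1, h2, h3, h4, hlead, hdisc⟩
      simp only [qval] at h1 h2 h3 h4 hdisc
      norm_num at hlead hdisc
      -- hlead : q 2 ≠ 0
      have e3 : q 3 = 0 := by linarith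
      have e4 : q 4 = 0 := by linarith
      have e5 : q 5 = -q 0 := by linarith
      have e2 : q 2 = q 0 := by linarith
      have h0 : q 0 ≠ 0 := e2 ▸ hlead
      rw [e3, e4, e5, e2] at hdisc
      have hd2 : q 1 ^ 2 = 3 * q 0 ^ 2 := by linear_combination hdisc / 4
      have key : (q 1 - Real.sqrt 3 * q 0) * (q 1 + Real.sqrt 3 * q 0) = 0 := by
        linear_combination hd2 - q 0 ^ 2 * sqrt3_sq
      rcases mul_eq_zero.mp key with hk | hk
      · refine ⟨conicA, by simp, q 0, h0, funext fun i => ?_⟩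
        fin_cases i
        · simp [conicA]
        · simp [conicA, Pi.smul_apply, smul_eq_mul]; linear_combination hk
        · simp [conicA, Pi.smul_apply, smul_eq_mul]; linear_combination e2
        · simp [conicA, Pi.smul_apply, smul_eq_mul]; linear_combination e3
        · simp [conicA, Pi.smul_apply, smul_eq_mul]; linear_combination e4
        · simp [conicA, Pi.smul_apply, smul_eq_mul]; linear_combination e5
      · refine ⟨conicB, by simp, q 0, h0, funext fun i => ?_⟩
        fin_cases i
        · simp [conicB]
        · simp [conicB, Pi.smul_apply, smul_eq_mul]; linear_combination hk
        · simp [conicB, Pi.smul_apply, smul_eq_mul]; linear_combination e2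
        · simp [conicB, Pi.smul_apply, smul_eq_mul]; linear_combination e3
        · simp [conicB, Pi.smul_apply, smul_eq_mul]; linear_combination e4
        · simp [conicB, Pi.smul_apply, smul_eq_mul]; linear_combination e5
    · intro q hq q' hq' h
      obtain ⟨r, hr, hqr⟩ := h
      simp only [Finset.mem_insert, Finset.mem_singleton] at hq hq'
      rcases hq with h | h <;> rcases hq' with h' | h' <;> subst h <;> subst h'
      · rfl
      · exact absurd hqr (no_crossAB r)
      · exact absurd hqr (no_crossBA r)
      · rfl
  · rintro ⟨q, hne, h1, h2, h3, h4, hlead, hdisc⟩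
    simp only [qval] at h1 h2 h3 h4 hdisc
    norm_num at hlead hdisc
    have e3 : q 3 = 0 := by linarith
    have e4 : q 4 = -4 * q 2 := by linarith
    have e5 : q 5 = 3 * q 2 := by linarith
    have e0 : q 0 = -3 * q 2 := by linarith
    have h2ne : q 2 ≠ 0 := by
      intro h; apply hlead; rw [e0, h]; ring
    rw [e3, e4, e5, e0] at hdisc
    have hp : 0 < q 2 ^ 2 := by positivity
    nlinarith [sq_nonneg (q 1), hp, hdisc]

end
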